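/- arXiv:1105.0288 — 12 statements merged into one kernel-verified Lean document; each statement's English description precedes it below -/
import Mathlib

section
/- Let U be a set of predicate symbols and M, N be sets of interpretations such that M is saturated relative to U. Then: (1) M = N if and only if M ⊆ N and N|U ⊆ M|U; (2) M is a proper subset of N if and only if M ⊆ N and M|U is a proper subset of N|U. -/
open Set

variable {A P : Type*}

/-- Restriction of an interpretation (set of atoms) to the predicate symbols in `U`. -/
def restr (pred : A → P) (U : Set P) (I : Set A) : Set A :=
  {p | p ∈ I ∧ pred p ∈ U}

/-- Restriction of a set of interpretations to the predicate symbols in `U`. -/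
def restrM (pred : A → P) (U : Set P) (M : Set (Set A)) : Set (Set A) :=
  restr pred U '' M

/-- `M` is saturated relative to `U`. -/
def saturated (pred : A → P) (U : Set P) (M : Set (Set A)) : Prop :=
  ∀ I : Set A, restr pred U I ∈ restrM pred U M → I ∈ M

/-- `σ_U(M)`: the set of all interpretations `I` with `I|U ∈ M|U`. -/
def sigmaSet (pred : A → P) (U : Set P) (M : Set (Set A)) : Set (Set A) :=
  {I | restr pred U I ∈ restrM pred U M}

/-- `M` is semi-saturated relative to `U`. -/
def semiSaturated (pred : A → P) (U : Set P) (M : Set (Set A)) : Prop :=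
  ∀ I : Set A, restr pred U I ∈ restrM pred U M →
    restr pred Uᶜ I ∈ restrM pred Uᶜ M → I ∈ M

/-- `M` is sequence-saturated relative to the family `S`. -/
def seqSaturated {ι : Type*} (pred : A → P) (S : ι → Set P) (M : Set (Set A)) : Prop :=
  ∀ I : Set A, (∀ α, restr pred (S α) I ∈ restrM pred (S α) M) → I ∈ M

/-- The difference in the interpretation of predicate symbol `Q` between `I` and `J`. -/
def diffP (pred : A → P) (Q : P) (I J : Set A) : Set A :=
  {p | p ∈ symmDiff I J ∧ pred p = Q}

/-- `J ≤_I J'` : `J` is at least as close to `I` as `J'`. -/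
def closerLE (pred : A → P) (I J J' : Set A) : Prop :=
  ∀ Q : P, diffP pred Q I J ⊆ diffP pred Q I J'

/-- `J <_I J'` : `J` is closer to `I` than `J'`. -/
def closerLT (pred : A → P) (I J J' : Set A) : Prop :=
  closerLE pred I J J' ∧ ¬ closerLE pred I J' J

/-- `I ⊕ N` for an interpretation `I` and a set of interpretations `N`. -/
def oplusI (pred : A → P) (I : Set A) (N : Set (Set A)) : Set (Set A) :=
  {J | J ∈ N ∧ ¬ ∃ J' ∈ N, closerLT pred I J' J}

/-- `M ⊕ N` for sets of interpretations `M`, `N`. -/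
def oplus (pred : A → P) (M N : Set (Set A)) : Set (Set A) :=
  ⋃ I ∈ M, oplusI pred I N

theorem stmt_1 (pred : A → P) (U : Set P) (M N : Set (Set A))
    (hM : saturated pred U M) :
    (M = N ↔ M ⊆ N ∧ restrM pred U N ⊆ restrM pred U M) ∧
    (M ⊂ N ↔ M ⊆ N ∧ restrM pred U M ⊂ restrM pred U N) := by
  have key : ∀ N' : Set (Set A), restrM pred U N' ⊆ restrM pred U M → N' ⊆ M := by
    intro N' h I hI
    exact hM I (h ⟨I, hI, rfl⟩)
  constructor
  · constructor
    · rintro rfl; exact ⟨subset_rfl, subset_rfl⟩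
    · rintro ⟨h1, h2⟩
      exact subset_antisymm h1 (key N h2)
  · constructor
    · rintro ⟨h1, h2⟩
      refine ⟨h1, Set.image_mono h1, fun hc => ?_⟩
      exact h2 (subset_antisymm h1 (key N hc)).ge
    · rintro ⟨h1, h2⟩
      refine ⟨h1, ?_⟩
      intro hc
      exact h2.2 (by rw [subset_antisymm h1 hc])
end

section
/- Let U be a set of predicate symbols and M, N be sets of interpretations. The following conditions are equivalent: (1) N = σ_U(M); (2) N coincides with M on U and N is saturated relative to U; (3) N is the greatest (with respect to inclusion) among all sets of interpretations coinciding with M on U. Furthermore, if N satisfies one of these conditions, then M ⊆ N. -/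
open Set

variable {A P : Type*}

lemma self_mem_sigma (pred : A → P) (U : Set P) (M : Set (Set A)) :
    M ⊆ sigmaSet pred U M := fun I hI => ⟨I, hI, rfl⟩

lemma restrM_sigma (pred : A → P) (U : Set P) (M : Set (Set A)) :
    restrM pred U (sigmaSet pred U M) = restrM pred U M := by
  apply Set.Subset.antisymm
  · rintro K ⟨I, hI, rfl⟩
    exact hI
  · exact Set.image_mono (self_mem_sigma pred U M)

theorem stmt_5 (pred : A → P) (U : Set P) (M N : Set (Set A)) :
    (N = sigmaSet pred U M ↔
      restrM pred U N = restrM pred U M ∧ saturated pred U N) ∧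
    (N = sigmaSet pred U M ↔
      restrM pred U N = restrM pred U M ∧
        ∀ N' : Set (Set A), restrM pred U N' = restrM pred U M → N' ⊆ N) ∧
    (N = sigmaSet pred U M → M ⊆ N) := by
  refine ⟨⟨?_, ?_⟩, ⟨?_, ?_⟩, ?_⟩
  · rintro rfl
    refine ⟨restrM_sigma pred U M, fun I hI => ?_⟩
    rw [restrM_sigma] at hI
    exact hI
  · rintro ⟨hr, hs⟩
    apply Set.Subset.antisymm
    · intro I hI
      show restr pred U I ∈ restrM pred U M
      rw [← hr]
      exact ⟨I, hI, rfl⟩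
    · intro I hI
      apply hs
      rw [hr]
      exact hI
  · rintro rfl
    refine ⟨restrM_sigma pred U M, fun N' hN' I hI => ?_⟩
    show restr pred U I ∈ restrM pred U M
    rw [← hN']
    exact ⟨I, hI, rfl⟩
  · rintro ⟨hr, hg⟩
    apply Set.Subset.antisymm
    · intro I hI
      show restr pred U I ∈ restrM pred U M
      rw [← hr]
      exact ⟨I, hI, rfl⟩
    · exact hg _ (restrM_sigma pred U M)
  · rintro rfl
    exact self_mem_sigma pred U M
end

section
/- Let U₁, U₂ be sets of predicate symbols and M be a set of interpretations. Then σ_{U₂}(σ_{U₁}(M)) = σ_{U₁ ∩ U₂}(M). -/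
open Set

variable {A P : Type*}

theorem stmt_6 (pred : A → P) (U₁ U₂ : Set P) (M : Set (Set A)) :
    sigmaSet pred U₂ (sigmaSet pred U₁ M) = sigmaSet pred (U₁ ∩ U₂) M := by
  ext I
  simp only [sigmaSet, restrM, Set.mem_image, Set.mem_setOf_eq]
  constructor
  · rintro ⟨J, ⟨K, hK, h1⟩, h2⟩
    refine ⟨K, hK, ?_⟩
    ext p
    rw [Set.ext_iff] at h1 h2
    have h1p := h1 p
    have h2p := h2 p
    simp only [restr, Set.mem_setOf_eq, Set.mem_inter_iff] at *
    tauto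
  · rintro ⟨K, hK, h⟩
    refine ⟨{p | (p ∈ I ∧ pred p ∈ U₂) ∨ (p ∈ K ∧ pred p ∉ U₂)}, ⟨K, hK, ?_⟩, ?_⟩ <;>
      ext p <;> rw [Set.ext_iff] at h <;> have hp := h p <;>
      simp only [restr, Set.mem_setOf_eq, Set.mem_inter_iff] at * <;>
      by_cases hU : pred p ∈ U₂ <;> simp [hU] at * <;> tauto
end

section
/- Let U be a set of predicate symbols and M, N be nonempty sets of interpretations such that M is saturated relative to U and N is saturated relative to the complement Uᶜ of U. Then M ∩ N is nonempty, is semi-saturated relative to U, coincides with M on U (i.e. (M ∩ N)|U = M|U), and coincides with N on Uᶜ (i.e. (M ∩ N)|Uᶜ = N|Uᶜ). -/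
open Set

variable {A P : Type*}

lemma restr_union_left (pred : A → P) (U : Set P) (I J : Set A) :
    restr pred U (restr pred U I ∪ restr pred Uᶜ J) = restr pred U I := by
  ext p
  simp only [restr, Set.mem_setOf_eq, Set.mem_union, Set.mem_compl_iff]
  tauto

lemma restr_union_right (pred : A → P) (U : Set P) (I J : Set A) :
    restr pred Uᶜ (restr pred U I ∪ restr pred Uᶜ J) = restr pred Uᶜ J := by
  ext p
  simp only [restr, Set.mem_setOf_eq, Set.mem_union, Set.mem_compl_iff]
  tauto

theorem stmt_9 (pred : A → P) (U : Set P) (M N : Set (Set A))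
    (hMne : M.Nonempty) (hNne : N.Nonempty)
    (hM : saturated pred U M) (hN : saturated pred Uᶜ N) :
    (M ∩ N).Nonempty ∧ semiSaturated pred U (M ∩ N) ∧
    restrM pred U (M ∩ N) = restrM pred U M ∧
    restrM pred Uᶜ (M ∩ N) = restrM pred Uᶜ N := by
  obtain ⟨I, hI⟩ := hMne
  obtain ⟨J, hJ⟩ := hNne
  set K := restr pred U I ∪ restr pred Uᶜ J with hK
  have hKM : K ∈ M := hM K (by rw [restr_union_left]; exact ⟨I, hI, rfl⟩)
  have hKN : K ∈ N := hN K (by rw [restr_union_right]; exact ⟨J, hJ, rfl⟩)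
  have hmono : ∀ (V : Set P), restrM pred V (M ∩ N) ⊆ restrM pred V M ∩ restrM pred V N := by
    rintro V _ ⟨L, ⟨hLM, hLN⟩, rfl⟩
    exact ⟨⟨L, hLM, rfl⟩, ⟨L, hLN, rfl⟩⟩
  refine ⟨⟨K, hKM, hKN⟩, ?_, ?_, ?_⟩
  · intro L h1 h2
    exact ⟨hM L ((hmono U h1).1), hN L ((hmono Uᶜ h2).2)⟩
  · apply Set.Subset.antisymm (fun x hx => (hmono U hx).1)
    rintro _ ⟨L, hLM, rfl⟩
    set K' := restr pred U L ∪ restr pred Uᶜ J with hK'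
    have hK'M : K' ∈ M := hM K' (by rw [restr_union_left]; exact ⟨L, hLM, rfl⟩)
    have hK'N : K' ∈ N := hN K' (by rw [restr_union_right]; exact ⟨J, hJ, rfl⟩)
    exact ⟨K', ⟨hK'M, hK'N⟩, restr_union_left pred U L J⟩
  · apply Set.Subset.antisymm (fun x hx => (hmono Uᶜ hx).2)
    rintro _ ⟨L, hLN, rfl⟩
    set K' := restr pred U I ∪ restr pred Uᶜ L with hK'
    have hK'M : K' ∈ M := hM K' (by rw [restr_union_left]; exact ⟨I, hI, rfl⟩)
    have hK'N : K' ∈ N := hN K' (by rw [restr_union_right]; exact ⟨L, hLN, rfl⟩)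
    exact ⟨K', ⟨hK'M, hK'N⟩, restr_union_right pred U I L⟩
end

section
/- Let U be a set of predicate symbols and M, N be sets of interpretations such that M is semi-saturated relative to U. Then: (1) M = N if and only if M ⊆ N and N|U ⊆ M|U and N|Uᶜ ⊆ M|Uᶜ; (2) M is a proper subset of N if and only if M ⊆ N and either M|U is a proper subset of N|U or M|Uᶜ is a proper subset of N|Uᶜ. -/
open Set

variable {A P : Type*}

lemma restrM_mono (pred : A → P) (U : Set P) {M N : Set (Set A)} (h : M ⊆ N) :
    restrM pred U M ⊆ restrM pred U N := Set.image_mono h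

theorem stmt_10 (pred : A → P) (U : Set P) (M N : Set (Set A))
    (hM : semiSaturated pred U M) :
    (M = N ↔ M ⊆ N ∧ restrM pred U N ⊆ restrM pred U M ∧
      restrM pred Uᶜ N ⊆ restrM pred Uᶜ M) ∧
    (M ⊂ N ↔ M ⊆ N ∧ (restrM pred U M ⊂ restrM pred U N ∨
      restrM pred Uᶜ M ⊂ restrM pred Uᶜ N)) := by
  have key : ∀ N' : Set (Set A), M ⊆ N' → restrM pred U N' ⊆ restrM pred U M →
      restrM pred Uᶜ N' ⊆ restrM pred Uᶜ M → M = N' := by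
    intro N' h1 h2 h3
    refine Set.Subset.antisymm h1 ?_
    intro I hI
    exact hM I (h2 ⟨I, hI, rfl⟩) (h3 ⟨I, hI, rfl⟩)
  constructor
  · constructor
    · rintro rfl
      exact ⟨subset_rfl, subset_rfl, subset_rfl⟩
    · rintro ⟨h1, h2, h3⟩
      exact key N h1 h2 h3
  · constructor
    · rintro ⟨h1, h2⟩
      refine ⟨h1, ?_⟩
      by_contra h
      push_neg at h
      obtain ⟨hU, hUc⟩ := h
      have hUM := restrM_mono pred U h1
      have hUcM := restrM_mono pred Uᶜ h1
      have h2' : restrM pred U N ⊆ restrM pred U M := by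
        by_contra hn
        exact hU ⟨hUM, fun hs => hn hs⟩
      have h3' : restrM pred Uᶜ N ⊆ restrM pred Uᶜ M := by
        by_contra hn
        exact hUc ⟨hUcM, fun hs => hn hs⟩
      exact h2 (key N h1 h2' h3').ge
    · rintro ⟨h1, h2⟩
      refine ⟨h1, ?_⟩
      intro hNM
      rcases h2 with h | h
      · exact h.2 (restrM_mono pred U hNM)
      · exact h.2 (restrM_mono pred Uᶜ hNM)
end

section
/- Let U be a set of predicate symbols and M₁, M₂ be nonempty sets of interpretations. Then there exists a greatest (with respect to inclusion) nonempty set N of interpretations that coincides with M₁ on U and with M₂ on the complement Uᶜ of U. Furthermore, this N is semi-saturated relative to U and contains M₁ ∩ M₂. -/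
open Set

variable {A P : Type*}

theorem stmt_11 (pred : A → P) (U : Set P) (M₁ M₂ : Set (Set A))
    (h₁ : M₁.Nonempty) (h₂ : M₂.Nonempty) :
    ∃ N : Set (Set A), N.Nonempty ∧
      restrM pred U N = restrM pred U M₁ ∧
      restrM pred Uᶜ N = restrM pred Uᶜ M₂ ∧
      (∀ N' : Set (Set A), N'.Nonempty →
        restrM pred U N' = restrM pred U M₁ →
        restrM pred Uᶜ N' = restrM pred Uᶜ M₂ → N' ⊆ N) ∧
      semiSaturated pred U N ∧ M₁ ∩ M₂ ⊆ N := by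
  have restr_mix : ∀ (I₁ I₂ : Set A),
      restr pred U (restr pred U I₁ ∪ restr pred Uᶜ I₂) = restr pred U I₁ := by
    intro I₁ I₂
    ext p
    simp only [restr, Set.mem_setOf_eq, Set.mem_union]
    constructor
    · rintro ⟨h | h, hU⟩
      · exact ⟨h.1, hU⟩
      · exact absurd hU h.2
    · rintro ⟨h, hU⟩
      exact ⟨Or.inl ⟨h, hU⟩, hU⟩
  have restr_mix' : ∀ (I₁ I₂ : Set A),
      restr pred Uᶜ (restr pred U I₁ ∪ restr pred Uᶜ I₂) = restr pred Uᶜ I₂ := by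
    intro I₁ I₂
    ext p
    simp only [restr, Set.mem_setOf_eq, Set.mem_union]
    constructor
    · rintro ⟨h | h, hU⟩
      · exact absurd h.2 hU
      · exact ⟨h.1, hU⟩
    · rintro ⟨h, hU⟩
      exact ⟨Or.inr ⟨h, hU⟩, hU⟩
  set N : Set (Set A) :=
    {I | restr pred U I ∈ restrM pred U M₁ ∧ restr pred Uᶜ I ∈ restrM pred Uᶜ M₂} with hN
  obtain ⟨I₁, hI₁⟩ := h₁
  obtain ⟨I₂, hI₂⟩ := h₂
  have hmixmem : ∀ J₁ ∈ M₁, ∀ J₂ ∈ M₂, restr pred U J₁ ∪ restr pred Uᶜ J₂ ∈ N := by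
    intro J₁ hJ₁ J₂ hJ₂
    constructor
    · rw [restr_mix]; exact ⟨J₁, hJ₁, rfl⟩
    · rw [restr_mix']; exact ⟨J₂, hJ₂, rfl⟩
  have hNne : N.Nonempty := ⟨_, hmixmem I₁ hI₁ I₂ hI₂⟩
  have hU1 : restrM pred U N = restrM pred U M₁ := by
    ext K
    constructor
    · rintro ⟨I, hI, rfl⟩; exact hI.1
    · rintro ⟨J₁, hJ₁, rfl⟩
      exact ⟨restr pred U J₁ ∪ restr pred Uᶜ I₂, hmixmem J₁ hJ₁ I₂ hI₂, restr_mix J₁ I₂⟩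
  have hU2 : restrM pred Uᶜ N = restrM pred Uᶜ M₂ := by
    ext K
    constructor
    · rintro ⟨I, hI, rfl⟩; exact hI.2
    · rintro ⟨J₂, hJ₂, rfl⟩
      exact ⟨restr pred U I₁ ∪ restr pred Uᶜ J₂, hmixmem I₁ hI₁ J₂ hJ₂, restr_mix' I₁ J₂⟩
  refine ⟨N, hNne, hU1, hU2, ?_, ?_, ?_⟩
  · intro N' _ hN'1 hN'2 I hI
    exact ⟨hN'1 ▸ ⟨I, hI, rfl⟩, hN'2 ▸ ⟨I, hI, rfl⟩⟩
  · intro I h1 h2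
    rw [hU1] at h1; rw [hU2] at h2
    exact ⟨h1, h2⟩
  · rintro I ⟨hI1, hI2⟩
    exact ⟨⟨I, hI1, rfl⟩, ⟨I, hI2, rfl⟩⟩
end

section
/- Let (U_α) be an indexed family of sets of predicate symbols and (X_α) be an indexed family (over the same index type) of sets of interpretations such that for every index α, X_α is saturated relative to U_α. Then the intersection ⋂_α X_α is saturated relative to the union ⋃_α U_α. -/
open Set

variable {A P : Type*}

theorem stmt_12 {ι : Type*} (pred : A → P) (U : ι → Set P)
    (X : ι → Set (Set A)) (h : ∀ α, saturated pred (U α) (X α)) :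
    saturated pred (⋃ α, U α) (⋂ α, X α) := by
  intro I hI
  obtain ⟨J, hJ, hJI⟩ := hI
  rw [mem_iInter]
  intro α
  apply h α
  refine ⟨J, (mem_iInter.mp hJ) α, ?_⟩
  have key : ∀ K : Set A, restr pred (U α) K = restr pred (U α) (restr pred (⋃ β, U β) K) := by
    intro K
    ext p
    simp only [restr, Set.mem_setOf_eq, Set.mem_iUnion]
    tauto
  rw [key J, key I, hJI]
end

section
/- Let S = (S_α) be a saturation sequence and M be a set of interpretations. The following conditions are equivalent: (1) M is sequence-saturated relative to S; (2) M = ⋂_α σ_{S_α}(M); (3) M = ⋂_α X_α for some family (X_α) of sets of interpretations such that for every α, X_α is saturated relative to S_α. -/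
open Set

variable {A P : Type*}

theorem stmt_13 {ι : Type*} (pred : A → P) (S : ι → Set P)
    (hdisj : Pairwise (Function.onFun Disjoint S)) (hcov : ⋃ α, S α = Set.univ)
    (M : Set (Set A)) :
    (seqSaturated pred S M ↔ M = ⋂ α, sigmaSet pred (S α) M) ∧
    (seqSaturated pred S M ↔
      ∃ X : ι → Set (Set A),
        (∀ α, saturated pred (S α) (X α)) ∧ M = ⋂ α, X α) := by
  have heq : seqSaturated pred S M ↔ M = ⋂ α, sigmaSet pred (S α) M := by
    constructor
    · intro h
      apply Set.Subset.antisymm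
      · intro I hI
        exact Set.mem_iInter.2 fun α => ⟨I, hI, rfl⟩
      · intro I hI
        exact h I fun α => Set.mem_iInter.1 hI α
    · intro h I hI
      rw [h]
      exact Set.mem_iInter.2 hI
  refine ⟨heq, ?_, ?_⟩
  · intro h
    refine ⟨fun α => sigmaSet pred (S α) M, fun α I hI => ?_, heq.1 h⟩
    obtain ⟨J, hJ, hJI⟩ := hI
    show restr pred (S α) I ∈ restrM pred (S α) M
    exact hJI ▸ hJ
  · rintro ⟨X, hX, hM⟩ I hI
    rw [hM]
    refine Set.mem_iInter.2 fun α => ?_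
    obtain ⟨J, hJ, hJI⟩ := hI α
    exact hX α I ⟨J, Set.mem_iInter.1 (hM ▸ hJ) α, hJI⟩
end

section
/- Let S = (S_α) be a saturation sequence and (X_α) be a family of nonempty sets of interpretations such that for every α, X_α is saturated relative to S_α, and let M = ⋂_α X_α. Then M is nonempty and for every α, X_α = σ_{S_α}(M). -/
open Set

variable {A P : Type*}

theorem stmt_14 {ι : Type*} (pred : A → P) (S : ι → Set P)
    (hdisj : Pairwise (Function.onFun Disjoint S)) (hcov : ⋃ α, S α = Set.univ)
    (X : ι → Set (Set A)) (hne : ∀ α, (X α).Nonempty)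
    (hsat : ∀ α, saturated pred (S α) (X α)) :
    (⋂ α, X α).Nonempty ∧ ∀ α, X α = sigmaSet pred (S α) (⋂ β, X β) := by
  classical
  choose I0 hI0 using hne
  set I : Set A := {p | ∃ α, pred p ∈ S α ∧ p ∈ I0 α} with hI
  have hrestr : ∀ α, restr pred (S α) I = restr pred (S α) (I0 α) := by
    intro α
    ext p
    simp only [restr, Set.mem_setOf_eq, hI]
    constructor
    · rintro ⟨⟨β, hβ, hp⟩, hpα⟩
      rcases eq_or_ne β α with rfl | hne'
      · exact ⟨hp, hpα⟩
      · exact absurd hpα (Set.disjoint_left.1 (hdisj hne') hβ)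
    · rintro ⟨hp, hpα⟩
      exact ⟨⟨α, hpα, hp⟩, hpα⟩
  have hImem : ∀ α, I ∈ X α := fun α =>
    hsat α I (by rw [hrestr α]; exact ⟨I0 α, hI0 α, rfl⟩)
  refine ⟨⟨I, Set.mem_iInter.2 hImem⟩, fun α => ?_⟩
  ext J
  constructor
  · intro hJ
    set K : Set A := {p | (pred p ∈ S α ∧ p ∈ J) ∨ (pred p ∉ S α ∧ p ∈ I)} with hK
    have hKα : restr pred (S α) K = restr pred (S α) J := by
      ext p; simp only [restr, hK, Set.mem_setOf_eq]; tauto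
    have hKβ : ∀ β, β ≠ α → restr pred (S β) K = restr pred (S β) I := by
      intro β hβ; ext p
      simp only [restr, hK, Set.mem_setOf_eq]
      constructor
      · rintro ⟨h | h, hpβ⟩
        · exact absurd h.1 (Set.disjoint_left.1 (hdisj hβ) hpβ)
        · exact ⟨h.2, hpβ⟩
      · rintro ⟨hp, hpβ⟩
        exact ⟨Or.inr ⟨fun hα => Set.disjoint_left.1 (hdisj hβ) hpβ hα, hp⟩, hpβ⟩
    have hKmem : ∀ β, K ∈ X β := by
      intro β
      rcases eq_or_ne β α with rfl | hβ
      · exact hsat β K (by rw [hKα]; exact ⟨J, hJ, rfl⟩)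
      · exact hsat β K (by rw [hKβ β hβ]; exact ⟨I, hImem β, rfl⟩)
    exact ⟨K, Set.mem_iInter.2 hKmem, hKα⟩
  · rintro ⟨L, hL, hLr⟩
    exact hsat α J ⟨L, Set.mem_iInter.1 hL α, hLr⟩
end

section
/- Let U be a set of predicate symbols, N be a set of interpretations that is saturated relative to U, and I, J be interpretations. If J ∈ I ⊕ N, then I coincides with J on the complement Uᶜ of U, i.e. I|Uᶜ = J|Uᶜ. -/
open Set

variable {A P : Type*}

theorem stmt_16 (pred : A → P) (U : Set P) (N : Set (Set A))
    (hN : saturated pred U N) (I J : Set A)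
    (hJ : J ∈ oplusI pred I N) :
    restr pred Uᶜ I = restr pred Uᶜ J := by
  obtain ⟨hJN, hmin⟩ := hJ
  by_contra hne
  -- the candidate interpretation agreeing with J on U and with I off U
  set K : Set A := {p | (pred p ∈ U ∧ p ∈ J) ∨ (pred p ∉ U ∧ p ∈ I)} with hK
  have hrestr : restr pred U K = restr pred U J := by
    ext p
    simp only [restr, Set.mem_setOf_eq, hK]
    tauto
  have hKN : K ∈ N := by
    apply hN
    rw [hrestr]
    exact ⟨J, hJN, rfl⟩
  -- there is an atom off U where I and J differ
  have hex : ∃ p, p ∈ symmDiff I J ∧ pred p ∉ U := by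
    by_contra h
    push_neg at h
    apply hne
    ext p
    simp only [restr, Set.mem_setOf_eq, Set.mem_compl_iff]
    constructor
    · rintro ⟨hpI, hpU⟩
      refine ⟨?_, hpU⟩
      by_contra hpJ
      exact hpU (h p (Set.mem_symmDiff.2 (Or.inl ⟨hpI, hpJ⟩)))
    · rintro ⟨hpJ, hpU⟩
      refine ⟨?_, hpU⟩
      by_contra hpI
      exact hpU (h p (Set.mem_symmDiff.2 (Or.inr ⟨hpJ, hpI⟩)))
  obtain ⟨p, hpd, hpU⟩ := hex
  -- K is strictly closer to I than J
  apply hmin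
  refine ⟨K, hKN, ?_, ?_⟩
  · intro Q q hq
    obtain ⟨hqd, hqQ⟩ := hq
    refine ⟨?_, hqQ⟩
    rcases Set.mem_symmDiff.1 hqd with ⟨hqI, hqK⟩ | ⟨hqK, hqI⟩
    · -- q ∈ I, q ∉ K : then pred q ∈ U and q ∉ J
      rcases Classical.em (pred q ∈ U) with hU | hU
      · have hqJ : q ∉ J := fun h => hqK (Or.inl ⟨hU, h⟩)
        exact Set.mem_symmDiff.2 (Or.inl ⟨hqI, hqJ⟩)
      · exact absurd (Or.inr ⟨hU, hqI⟩) hqK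
    · -- q ∈ K, q ∉ I : then pred q ∈ U and q ∈ J
      rcases hqK with ⟨hU, hqJ⟩ | ⟨_, hqI'⟩
      · exact Set.mem_symmDiff.2 (Or.inr ⟨hqJ, hqI⟩)
      · exact absurd hqI' hqI
  · intro hle
    have := hle (pred p) ⟨hpd, rfl⟩
    obtain ⟨hpd', _⟩ := this
    rcases Set.mem_symmDiff.1 hpd' with ⟨hpI, hpK⟩ | ⟨hpK, hpI⟩
    · exact hpK (Or.inr ⟨hpU, hpI⟩)
    · rcases hpK with ⟨hU, _⟩ | ⟨_, hpI'⟩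
      · exact hpU hU
      · exact hpI hpI'
end

section
/- Let U be a set of predicate symbols and M, N be sets of interpretations that are both saturated relative to U. Then M ⊕ N is also saturated relative to U. -/
open Set

variable {A P : Type*}

lemma mem_diffP {pred : A → P} {Q : P} {p : A} {I J : Set A} :
    p ∈ diffP pred Q I J ↔ ((p ∈ I ∧ p ∉ J) ∨ (p ∈ J ∧ p ∉ I)) ∧ pred p = Q := by
  simp [diffP, Set.mem_symmDiff]

lemma diffP_congr (pred : A → P) (Q : P) {I I' J J' : Set A}
    (hI : ∀ p, pred p = Q → (p ∈ I ↔ p ∈ I'))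
    (hJ : ∀ p, pred p = Q → (p ∈ J ↔ p ∈ J')) :
    diffP pred Q I J = diffP pred Q I' J' := by
  ext p
  simp only [mem_diffP]
  constructor <;> rintro ⟨h, rfl⟩ <;>
  · refine ⟨?_, rfl⟩
    have h1 := hI p rfl; have h2 := hJ p rfl; tauto

theorem stmt_17 (pred : A → P) (U : Set P) (M N : Set (Set A))
    (hM : saturated pred U M) (hN : saturated pred U N) :
    saturated pred U (oplus pred M N) := by
  intro I hI
  obtain ⟨K, hK, hKI⟩ := hI
  rw [oplus, Set.mem_iUnion₂] at hK
  obtain ⟨I₀, hI₀M, hKN, hKmin⟩ := hK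
  -- K and I agree on U-atoms
  have hKIeq : ∀ p : A, pred p ∈ U → (p ∈ K ↔ p ∈ I) := by
    intro p hp
    have := Set.ext_iff.mp hKI p
    simp only [restr, Set.mem_setOf_eq] at this
    tauto
  -- define I₁
  set I₁ : Set A := restr pred U I₀ ∪ restr pred Uᶜ I with hI₁def
  have memI₁ : ∀ p : A, p ∈ I₁ ↔ (p ∈ I₀ ∧ pred p ∈ U) ∨ (p ∈ I ∧ pred p ∉ U) := by
    intro p; simp [hI₁def, restr]
  have hI₁M : I₁ ∈ M := by
    apply hM
    refine ⟨I₀, hI₀M, ?_⟩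
    ext p
    simp only [restr, Set.mem_setOf_eq, memI₁]
    tauto
  have hIN : I ∈ N := by
    apply hN
    exact ⟨K, hKN, hKI⟩
  rw [oplus, Set.mem_iUnion₂]
  refine ⟨I₁, hI₁M, hIN, ?_⟩
  rintro ⟨J', hJ'N, hlt, hnle⟩
  -- I₁ agrees with I on non-U atoms
  have hI₁I : ∀ p : A, pred p ∉ U → (p ∈ I₁ ↔ p ∈ I) := by
    intro p hp; rw [memI₁]; tauto
  -- I₁ agrees with I₀ on U atoms
  have hI₁I₀ : ∀ p : A, pred p ∈ U → (p ∈ I₁ ↔ p ∈ I₀) := by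
    intro p hp; rw [memI₁]; tauto
  -- J' agrees with I on non-U atoms
  have hJ'I : ∀ p : A, pred p ∉ U → (p ∈ J' ↔ p ∈ I) := by
    intro p hp
    have hsub := hlt (pred p)
    have hempty : diffP pred (pred p) I₁ I = ∅ := by
      ext q
      simp only [mem_diffP, Set.mem_empty_iff_false, iff_false, not_and]
      intro h heq
      have hq : pred q ∉ U := by rw [heq]; exact hp
      have := hI₁I q hq; tauto
    by_contra hc
    have hmem : p ∈ diffP pred (pred p) I₁ J' := by
      rw [mem_diffP]
      have := hI₁I p hp
      exact ⟨by tauto, rfl⟩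
    have hfin := hsub hmem
    rw [hempty] at hfin
    exact hfin
  -- define J''
  set J'' : Set A := restr pred U J' ∪ restr pred Uᶜ K with hJ''def
  have memJ'' : ∀ p : A, p ∈ J'' ↔ (p ∈ J' ∧ pred p ∈ U) ∨ (p ∈ K ∧ pred p ∉ U) := by
    intro p; simp [hJ''def, restr]
  have hJ''N : J'' ∈ N := by
    apply hN
    refine ⟨J', hJ'N, ?_⟩
    ext p
    simp only [restr, Set.mem_setOf_eq, memJ'']
    tauto
  -- key diff equalities
  have eq1 : ∀ Q ∈ U, diffP pred Q I₀ J'' = diffP pred Q I₁ J' := by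
    intro Q hQ
    apply diffP_congr
    · intro p hp; exact (hI₁I₀ p (hp ▸ hQ)).symm
    · intro p hp; rw [memJ'']; have := hp ▸ hQ; tauto
  have eq2 : ∀ Q ∈ U, diffP pred Q I₁ I = diffP pred Q I₀ K := by
    intro Q hQ
    apply diffP_congr
    · intro p hp; exact hI₁I₀ p (hp ▸ hQ)
    · intro p hp; exact (hKIeq p (hp ▸ hQ)).symm
  have eq3 : ∀ Q : P, Q ∉ U → diffP pred Q I₀ J'' = diffP pred Q I₀ K := by
    intro Q hQ
    apply diffP_congr
    · intro p _; rfl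
    · intro p hp; rw [memJ'']; have : pred p ∉ U := hp ▸ hQ; tauto
  apply hKmin
  refine ⟨J'', hJ''N, ?_, ?_⟩
  · intro Q
    by_cases hQ : Q ∈ U
    · rw [eq1 Q hQ, ← eq2 Q hQ]; exact hlt Q
    · rw [eq3 Q hQ]
  · intro hle
    apply hnle
    intro Q
    by_cases hQ : Q ∈ U
    · rw [eq2 Q hQ, ← eq1 Q hQ]; exact hle Q
    · intro p hp
      rw [mem_diffP] at hp
      obtain ⟨h, rfl⟩ := hp
      have := hI₁I p hQ
      tauto
end

section
/- Let S = (S_α) be a saturation sequence and M, N be sets of interpretations that are both sequence-saturated relative to S. If M ⊕ N is nonempty, then for every α, σ_{S_α}(M ⊕ N) = σ_{S_α}(M) ⊕ σ_{S_α}(N). -/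
open Set

variable {A P : Type*}

lemma restr_agree (pred : A → P) (U : Set P) {I J : Set A}
    (h : restr pred U I = restr pred U J) {p : A} (hp : pred p ∈ U) :
    p ∈ I ↔ p ∈ J := by
  have := Set.ext_iff.mp h p
  simpa [restr, hp] using this

def mixS (pred : A → P) (U : Set P) (L K : Set A) : Set A :=
  {p | (pred p ∈ U ∧ p ∈ L) ∨ (pred p ∉ U ∧ p ∈ K)}

lemma mixS_mem_U (pred : A → P) (U : Set P) (L K : Set A) {p : A} (hp : pred p ∈ U) :
    p ∈ mixS pred U L K ↔ p ∈ L := by simp [mixS, hp]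

lemma mixS_mem_notU (pred : A → P) (U : Set P) (L K : Set A) {p : A} (hp : pred p ∉ U) :
    p ∈ mixS pred U L K ↔ p ∈ K := by simp [mixS, hp]

lemma restr_mixS_left (pred : A → P) (U : Set P) (L K : Set A) :
    restr pred U (mixS pred U L K) = restr pred U L := by
  ext p
  by_cases hp : pred p ∈ U <;> simp [restr, mixS, hp]

lemma restr_mixS_right (pred : A → P) {U V : Set P} (h : Disjoint U V) (L K : Set A) :
    restr pred V (mixS pred U L K) = restr pred V K := by
  ext p
  by_cases hp : pred p ∈ V
  · have hpU : pred p ∉ U := Set.disjoint_right.mp h hp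
    simp [restr, mixS, hp, hpU]
  · simp [restr, hp]

lemma mixS_mem {ι : Type*} (pred : A → P) (S : ι → Set P)
    (hdisj : Pairwise (Function.onFun Disjoint S)) {N : Set (Set A)}
    (hN : seqSaturated pred S N) (α : ι) {L K : Set A} (hL : L ∈ N) (hK : K ∈ N) :
    mixS pred (S α) L K ∈ N := by
  apply hN
  intro β
  by_cases hβ : β = α
  · subst hβ
    rw [restr_mixS_left]
    exact ⟨L, hL, rfl⟩
  · rw [restr_mixS_right pred (hdisj (Ne.symm hβ)) L K]
    exact ⟨K, hK, rfl⟩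

lemma diffP_eq_empty (pred : A → P) (Q : P) {I J : Set A}
    (h : ∀ p, pred p = Q → (p ∈ I ↔ p ∈ J)) : diffP pred Q I J = ∅ := by
  ext p
  simp only [diffP, Set.mem_setOf_eq, Set.mem_symmDiff, Set.mem_empty_iff_false, iff_false]
  rintro ⟨h1, rfl⟩
  have := h p rfl
  tauto

lemma mem_sigma {pred : A → P} {U : Set P} {M : Set (Set A)} {I : Set A} :
    I ∈ sigmaSet pred U M ↔ ∃ J ∈ M, restr pred U J = restr pred U I := by
  simp [sigmaSet, restrM]

lemma mem_oplus {pred : A → P} {M N : Set (Set A)} {K : Set A} :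
    K ∈ oplus pred M N ↔ ∃ I0 ∈ M, K ∈ N ∧ ¬ ∃ J' ∈ N, closerLT pred I0 J' K := by
  simp only [oplus, Set.mem_iUnion, oplusI, Set.mem_setOf_eq, exists_prop]

theorem stmt_19 {ι : Type*} (pred : A → P) (S : ι → Set P)
    (hdisj : Pairwise (Function.onFun Disjoint S)) (hcov : ⋃ α, S α = Set.univ)
    (M N : Set (Set A)) (hM : seqSaturated pred S M) (hN : seqSaturated pred S N)
    (hne : (oplus pred M N).Nonempty) :
    ∀ α, sigmaSet pred (S α) (oplus pred M N) =
      oplus pred (sigmaSet pred (S α) M) (sigmaSet pred (S α) N) := by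
  intro α
  set U := S α with hUdef
  ext I
  constructor
  · -- forward direction
    intro hI
    rw [mem_sigma] at hI
    obtain ⟨K, hKop, hKI⟩ := hI
    rw [mem_oplus] at hKop
    obtain ⟨I0, hI0M, hKN, hmin⟩ := hKop
    rw [mem_oplus]
    set I1 := mixS pred U I0 I with hI1def
    refine ⟨I1, ?_, ?_, ?_⟩
    · rw [mem_sigma]
      exact ⟨I0, hI0M, (restr_mixS_left pred U I0 I).symm⟩
    · rw [mem_sigma]
      exact ⟨K, hKN, hKI⟩
    · rintro ⟨J', hJ'σ, hlt⟩
      rw [mem_sigma] at hJ'σ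
      obtain ⟨L, hLN, hLJ'⟩ := hJ'σ
      set J'' := mixS pred U L K with hJ''def
      have hJ''N : J'' ∈ N := mixS_mem pred S hdisj hN α hLN hKN
      apply hmin
      refine ⟨J'', hJ''N, ?_, ?_⟩
      · -- closerLE I0 J'' K
        intro Q
        by_cases hQ : Q ∈ U
        · have e1 : diffP pred Q I0 J'' = diffP pred Q I1 J' :=
            diffP_congr pred Q
              (fun p hp => (mixS_mem_U pred U I0 I (hp ▸ hQ)).symm)
              (fun p hp => (mixS_mem_U pred U L K (hp ▸ hQ)).trans
                (restr_agree pred U hLJ' (hp ▸ hQ)))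
          have e2 : diffP pred Q I0 K = diffP pred Q I1 I :=
            diffP_congr pred Q
              (fun p hp => (mixS_mem_U pred U I0 I (hp ▸ hQ)).symm)
              (fun p hp => restr_agree pred U hKI (hp ▸ hQ))
          rw [e1, e2]
          exact hlt.1 Q
        · have e3 : diffP pred Q I0 J'' = diffP pred Q I0 K :=
            diffP_congr pred Q (fun p _ => Iff.rfl)
              (fun p hp => mixS_mem_notU pred U L K (hp ▸ hQ))
          rw [e3]
      · -- ¬ closerLE I0 K J''
        intro hc
        apply hlt.2
        intro Q
        by_cases hQ : Q ∈ U
        · have e1 : diffP pred Q I0 J'' = diffP pred Q I1 J' :=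
            diffP_congr pred Q
              (fun p hp => (mixS_mem_U pred U I0 I (hp ▸ hQ)).symm)
              (fun p hp => (mixS_mem_U pred U L K (hp ▸ hQ)).trans
                (restr_agree pred U hLJ' (hp ▸ hQ)))
          have e2 : diffP pred Q I0 K = diffP pred Q I1 I :=
            diffP_congr pred Q
              (fun p hp => (mixS_mem_U pred U I0 I (hp ▸ hQ)).symm)
              (fun p hp => restr_agree pred U hKI (hp ▸ hQ))
          rw [← e1, ← e2]
          exact hc Q
        · have e4 : diffP pred Q I1 I = ∅ :=
            diffP_eq_empty pred Q
              (fun p hp => mixS_mem_notU pred U I0 I (hp ▸ hQ))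
          rw [e4]
          exact Set.empty_subset _
  · -- backward direction
    intro hI
    rw [mem_oplus] at hI
    obtain ⟨I1, hI1σ, hIσN, hminσ⟩ := hI
    rw [mem_sigma] at hI1σ hIσN
    obtain ⟨I0, hI0M, hI0I1⟩ := hI1σ
    obtain ⟨L, hLN, hLI⟩ := hIσN
    obtain ⟨K0, hK0⟩ := hne
    rw [mem_oplus] at hK0
    obtain ⟨I0', hI0'M, hK0N, hmin0⟩ := hK0
    rw [mem_sigma]
    set Istar := mixS pred U I0 I0' with hIstardef
    set K := mixS pred U L K0 with hKdef
    have hKN : K ∈ N := mixS_mem pred S hdisj hN α hLN hK0N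
    refine ⟨K, ?_, (restr_mixS_left pred U L K0).trans hLI⟩
    rw [mem_oplus]
    refine ⟨Istar, mixS_mem pred S hdisj hM α hI0M hI0'M, hKN, ?_⟩
    rintro ⟨J'', hJ''N, hle, hnle⟩
    obtain ⟨Q0, hQ0⟩ := not_forall.mp hnle
    obtain ⟨p0, hp0in, hp0out⟩ := Set.not_subset.mp hQ0
    -- congruence facts for Q ∈ U
    have eI1 : ∀ Q ∈ U, ∀ p, pred p = Q → (p ∈ Istar ↔ p ∈ I1) :=
      fun Q hQ p hp => (mixS_mem_U pred U I0 I0' (hp ▸ hQ)).trans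
        (restr_agree pred U hI0I1 (hp ▸ hQ))
    have eK : ∀ Q ∈ U, ∀ p, pred p = Q → (p ∈ K ↔ p ∈ I) :=
      fun Q hQ p hp => (mixS_mem_U pred U L K0 (hp ▸ hQ)).trans
        (restr_agree pred U hLI (hp ▸ hQ))
    by_cases hQ0U : Q0 ∈ U
    · -- contradict minimality of I over σ_U(N)
      apply hminσ
      set J' := mixS pred U J'' I with hJ'def
      refine ⟨J', ?_, ?_, ?_⟩
      · rw [mem_sigma]
        exact ⟨J'', hJ''N, (restr_mixS_left pred U J'' I).symm⟩
      · intro Q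
        by_cases hQ : Q ∈ U
        · have e1 : diffP pred Q I1 J' = diffP pred Q Istar J'' :=
            diffP_congr pred Q
              (fun p hp => (eI1 Q hQ p hp).symm)
              (fun p hp => mixS_mem_U pred U J'' I (hp ▸ hQ))
          have e2 : diffP pred Q I1 I = diffP pred Q Istar K :=
            diffP_congr pred Q
              (fun p hp => (eI1 Q hQ p hp).symm)
              (fun p hp => (eK Q hQ p hp).symm)
          rw [e1, e2]
          exact hle Q
        · have e3 : diffP pred Q I1 J' = diffP pred Q I1 I :=
            diffP_congr pred Q (fun p _ => Iff.rfl)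
              (fun p hp => mixS_mem_notU pred U J'' I (hp ▸ hQ))
          rw [e3]
      · intro hc
        have e1 : diffP pred Q0 I1 J' = diffP pred Q0 Istar J'' :=
          diffP_congr pred Q0
            (fun p hp => (eI1 Q0 hQ0U p hp).symm)
            (fun p hp => mixS_mem_U pred U J'' I (hp ▸ hQ0U))
        have e2 : diffP pred Q0 I1 I = diffP pred Q0 Istar K :=
          diffP_congr pred Q0
            (fun p hp => (eI1 Q0 hQ0U p hp).symm)
            (fun p hp => (eK Q0 hQ0U p hp).symm)
        have := hc Q0
        rw [e2, e1] at this
        exact hp0out (this hp0in)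
    · -- contradict minimality of K0 over N
      apply hmin0
      set J2 := mixS pred U K0 J'' with hJ2def
      have eI0' : ∀ Q, Q ∉ U → ∀ p, pred p = Q → (p ∈ Istar ↔ p ∈ I0') :=
        fun Q hQ p hp => mixS_mem_notU pred U I0 I0' (hp ▸ hQ)
      have eK' : ∀ Q, Q ∉ U → ∀ p, pred p = Q → (p ∈ K ↔ p ∈ K0) :=
        fun Q hQ p hp => mixS_mem_notU pred U L K0 (hp ▸ hQ)
      refine ⟨J2, mixS_mem pred S hdisj hN α hK0N hJ''N, ?_, ?_⟩
      · intro Q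
        by_cases hQ : Q ∈ U
        · have e3 : diffP pred Q I0' J2 = diffP pred Q I0' K0 :=
            diffP_congr pred Q (fun p _ => Iff.rfl)
              (fun p hp => mixS_mem_U pred U K0 J'' (hp ▸ hQ))
          rw [e3]
        · have e1 : diffP pred Q I0' J2 = diffP pred Q Istar J'' :=
            diffP_congr pred Q
              (fun p hp => (eI0' Q hQ p hp).symm)
              (fun p hp => mixS_mem_notU pred U K0 J'' (hp ▸ hQ))
          have e2 : diffP pred Q I0' K0 = diffP pred Q Istar K :=
            diffP_congr pred Q
              (fun p hp => (eI0' Q hQ p hp).symm)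
              (fun p hp => (eK' Q hQ p hp).symm)
          rw [e1, e2]
          exact hle Q
      · intro hc
        have e1 : diffP pred Q0 I0' J2 = diffP pred Q0 Istar J'' :=
          diffP_congr pred Q0
            (fun p hp => (eI0' Q0 hQ0U p hp).symm)
            (fun p hp => mixS_mem_notU pred U K0 J'' (hp ▸ hQ0U))
        have e2 : diffP pred Q0 I0' K0 = diffP pred Q0 Istar K :=
          diffP_congr pred Q0
            (fun p hp => (eI0' Q0 hQ0U p hp).symm)
            (fun p hp => (eK' Q0 hQ0U p hp).symm)
        have := hc Q0
        rw [e2, e1] at this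
        exact hp0out (this hp0in)
end
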